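/- For any n-run OofA design D on m components with moment matrix M = XᵀX of its PWO model matrix, tr(M²) = n² { tr(M_full²)/(m!)² + 2 C_1(D) + 2 C_2(D) }, where M_full is the moment matrix of the PWO model matrix of the full design D_full of all m! permutations. -/
import Mathlib


/-- A run (addition order) on `m` components: position `r` receives component `x r`.
The position map `π_x` is `x.symm`. -/
abbrev Run (m : ℕ) := Equiv.Perm (Fin m)

/-- Kendall tau distance between two runs. -/
def kendall {m : ℕ} (x y : Run m) : ℕ :=
  (Finset.univ.filter fun p : Fin m × Fin m =>
    p.1 < p.2 ∧
      (((x.symm p.1 : ℕ) : ℤ) - ((x.symm p.2 : ℕ) : ℤ)) *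
        (((y.symm p.1 : ℕ) : ℤ) - ((y.symm p.2 : ℕ) : ℤ)) < 0).card

/-- Average pairwise Kendall tau distance of an `n`-run design. -/
noncomputable def kave {m n : ℕ} (D : Fin n → Run m) : ℝ :=
  (∑ p ∈ Finset.univ.filter (fun p : Fin n × Fin n => p.1 < p.2),
      (kendall (D p.1) (D p.2) : ℝ)) / (n.choose 2 : ℝ)

/-- Second moment of the pairwise Kendall tau distances of an `n`-run design. -/
noncomputable def km2 {m n : ℕ} (D : Fin n → Run m) : ℝ :=
  (∑ p ∈ Finset.univ.filter (fun p : Fin n × Fin n => p.1 < p.2),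
      (kendall (D p.1) (D p.2) : ℝ) ^ 2) / (n.choose 2 : ℝ)

/-- The PWO factor `z_ab(x)` as a real number. -/
def zab {m : ℕ} (x : Run m) (p : Fin m × Fin m) : ℝ :=
  if x.symm p.1 < x.symm p.2 then 1 else -1

/-- The set `Q` of ordered component pairs `(a,b)` with `a < b`. -/
def pairsQ (m : ℕ) : Finset (Fin m × Fin m) :=
  Finset.univ.filter fun p => p.1 < p.2

/-- The `J`-characteristic `J_W(D) = Σ_{x ∈ D} Π_{(a,b) ∈ W} z_ab(x)`. -/
noncomputable def Jchar {m : ℕ} {ι : Type} [Fintype ι] (D : ι → Run m)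
    (W : Finset (Fin m × Fin m)) : ℝ :=
  ∑ i, ∏ p ∈ W, zab (D i) p

/-- The centralized generalized wordlength pattern
`C_a(D) = Σ_{W ⊆ Q, |W| = a} (J_W(D)/n − J_W(D_full)/m!)²`,
where the full design consists of all `m!` permutations. -/
noncomputable def Cwlp {m n : ℕ} (D : Fin n → Run m) (a : ℕ) : ℝ :=
  ∑ W ∈ (pairsQ m).powersetCard a,
    (Jchar D W / (n : ℝ) - Jchar (fun σ : Run m => σ) W / (Nat.factorial m : ℝ)) ^ 2

/-- The PWO model matrix of a design: a row `(1, z_ab(x_i) : a < b)` for each run. -/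
def pwoX {m : ℕ} {ι : Type} (D : ι → Run m) :
    Matrix ι (Option {p : Fin m × Fin m // p.1 < p.2}) ℝ :=
  fun i c => match c with
    | none => 1
    | some p => zab (D i) p.1

section Aux

open Finset Matrix

variable {m : ℕ}

abbrev PP (m : ℕ) := {p : Fin m × Fin m // p.1 < p.2}

@[simp] lemma pwoX_none {ι : Type} (D : ι → Run m) (i : ι) : pwoX D i none = 1 := rfl
@[simp] lemma pwoX_some {ι : Type} (D : ι → Run m) (i : ι) (p : PP m) :
    pwoX D i (some p) = zab (D i) p.1 := rfl

lemma zab_sq (x : Run m) (p : Fin m × Fin m) : zab x p * zab x p = 1 := by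
  unfold zab; split <;> norm_num

noncomputable def Gm {ι : Type} [Fintype ι] (D : ι → Run m) (c c' : Option (PP m)) : ℝ :=
  ∑ i, pwoX D i c * pwoX D i c'

lemma Gm_symm {ι : Type} [Fintype ι] (D : ι → Run m) (c c' : Option (PP m)) :
    Gm D c c' = Gm D c' c :=
  Finset.sum_congr rfl fun i _ => mul_comm _ _

lemma trace_eq {ι : Type} [Fintype ι] (D : ι → Run m) :
    Matrix.trace ((pwoX D)ᵀ * pwoX D * ((pwoX D)ᵀ * pwoX D)) =
      ∑ c, ∑ c', (Gm D c c') ^ 2 := by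
  have hA : ∀ c c', ((pwoX D)ᵀ * pwoX D) c c' = Gm D c c' := by
    intro c c'; simp [Matrix.mul_apply, Matrix.transpose_apply, Gm]
  have hdiag : ∀ c, (((pwoX D)ᵀ * pwoX D) * ((pwoX D)ᵀ * pwoX D)) c c
      = ∑ c', (Gm D c c') ^ 2 := by
    intro c
    rw [Matrix.mul_apply]
    refine Finset.sum_congr rfl fun c' _ => ?_
    rw [hA, hA, Gm_symm D c' c, sq]
  rw [Matrix.trace]
  simp only [Matrix.diag_apply]
  exact Finset.sum_congr rfl fun c _ => hdiag c

end Aux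

section Aux2
open Finset Matrix
variable {m : ℕ}

lemma zab_swap (x : Run m) {a b : Fin m} (h : a ≠ b) : zab x (b, a) = - zab x (a, b) := by
  unfold zab
  have hne : x.symm a ≠ x.symm b := fun hc => h (x.symm.injective hc)
  rcases lt_or_gt_of_ne hne with h' | h'
  · rw [if_neg (asymm h'), if_pos h']
  · rw [if_pos h', if_neg (asymm h')]; norm_num

lemma act_symm (τ x : Run m) (a : Fin m) : (τ⁻¹ * x).symm a = x.symm (τ a) := by
  rw [← Equiv.Perm.inv_def, ← Equiv.Perm.inv_def, _root_.mul_inv_rev, inv_inv, Equiv.Perm.mul_apply]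

lemma zab_act (τ x : Run m) (a b : Fin m) : zab (τ⁻¹ * x) (a, b) = zab x (τ a, τ b) := by
  unfold zab
  rw [show ((a,b) : Fin m × Fin m).1 = a from rfl, show ((a,b) : Fin m × Fin m).2 = b from rfl,
    act_symm, act_symm]

/-- sum over all ordered distinct pairs -/
noncomputable def sfull (x y : Run m) : ℝ :=
  ∑ z ∈ (Finset.univ : Finset (Fin m × Fin m)).filter (fun z => z.1 ≠ z.2),
    zab x z * zab y z

lemma sfull_act (τ x y : Run m) : sfull (τ⁻¹ * x) (τ⁻¹ * y) = sfull x y := by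
  unfold sfull
  refine Finset.sum_equiv (Equiv.prodCongr τ τ) ?_ ?_
  · intro z
    simp [τ.injective.ne_iff]
  · intro z _
    obtain ⟨a, b⟩ := z
    simp only [Equiv.prodCongr_apply, Prod.map]
    rw [zab_act]
    try rw [zab_act]

noncomputable def dot (x y : Run m) : ℝ := 1 + ∑ p : PP m, zab x p.1 * zab y p.1

lemma sfull_eq (x y : Run m) : sfull x y = 2 * ∑ p : PP m, zab x p.1 * zab y p.1 := by
  have hsub : ∑ p : PP m, zab x p.1 * zab y p.1
      = ∑ a ∈ pairsQ m, zab x a * zab y a := by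
    exact (Finset.sum_subtype (pairsQ m) (fun a => by simp [pairsQ])
      (fun a => zab x a * zab y a)).symm
  unfold sfull
  rw [hsub, ← Finset.sum_filter_add_sum_filter_not
      ((Finset.univ : Finset (Fin m × Fin m)).filter (fun z => z.1 ≠ z.2))
      (fun z => z.1 < z.2)]
  have e1 : ((Finset.univ : Finset (Fin m × Fin m)).filter (fun z => z.1 ≠ z.2)).filter
      (fun z => z.1 < z.2) = pairsQ m := by
    ext z
    simp only [Finset.mem_filter, Finset.mem_univ, true_and, pairsQ]
    exact ⟨fun h => h.2, fun h => ⟨ne_of_lt h, h⟩⟩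
  have e2 : ((Finset.univ : Finset (Fin m × Fin m)).filter (fun z => z.1 ≠ z.2)).filter
      (fun z => ¬ z.1 < z.2) = Finset.univ.filter (fun z => z.2 < z.1) := by
    ext z
    simp only [Finset.mem_filter, Finset.mem_univ, true_and]
    constructor
    · rintro ⟨hne, hnlt⟩
      exact lt_of_le_of_ne (not_lt.1 hnlt) (Ne.symm hne)
    · intro h
      exact ⟨ne_of_gt h, asymm h⟩
  have e3 : ∑ z ∈ Finset.univ.filter (fun z : Fin m × Fin m => z.2 < z.1), zab x z * zab y z
      = ∑ z ∈ pairsQ m, zab x z * zab y z := by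
    refine Finset.sum_equiv (Equiv.prodComm _ _)
      (g := fun z => zab x z * zab y z) ?_ ?_
    · intro z
      simp [pairsQ, Equiv.prodComm_apply]
    · intro z hz
      simp only [Finset.mem_filter] at hz
      obtain ⟨a, b⟩ := z
      simp only [Equiv.prodComm_apply, Prod.swap]
      have hne : a ≠ b := ne_of_gt hz.2
      rw [zab_swap x hne, zab_swap y hne]
      ring
  rw [e1, e2, e3]; ring

lemma dot_act (τ x y : Run m) : dot (τ⁻¹ * x) (τ⁻¹ * y) = dot x y := by
  have h := sfull_act τ x y
  rw [sfull_eq, sfull_eq] at h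
  unfold dot; linarith

noncomputable def Rr (x : Run m) : ℝ := ∑ σ : Run m, (dot x σ) ^ 2

lemma Rr_const (x : Run m) : Rr x = Rr (1 : Run m) := by
  unfold Rr
  have h1 : ∀ σ : Run m, dot x σ = dot 1 (x⁻¹ * σ) := by
    intro σ
    have := dot_act x x σ
    rw [inv_mul_cancel] at this
    exact this.symm
  calc ∑ σ : Run m, (dot x σ) ^ 2 = ∑ σ : Run m, (dot 1 (x⁻¹ * σ)) ^ 2 :=
        Finset.sum_congr rfl fun σ _ => by rw [h1]
    _ = ∑ σ : Run m, (dot 1 σ) ^ 2 :=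
        Fintype.sum_equiv (Equiv.mulLeft x⁻¹) _ _ (fun σ => by simp)

end Aux2

section Aux3
open Finset Matrix
variable {m : ℕ}

def zcol (x : Run m) : Option (PP m) → ℝ
  | none => 1
  | some p => zab x p.1

lemma pwoX_apply {ι : Type} (D : ι → Run m) (i : ι) (c : Option (PP m)) :
    pwoX D i c = zcol (D i) c := by cases c <;> rfl

lemma dot_eq (x y : Run m) : ∑ c : Option (PP m), zcol x c * zcol y c = dot x y := by
  rw [Fintype.sum_option]
  unfold dot
  simp [zcol]

lemma swap4 {ι : Type} [Fintype ι] (f : Option (PP m) → Option (PP m) → Run m → ι → ℝ) :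
    ∑ c, ∑ c', ∑ σ : Run m, ∑ i, f c c' σ i
      = ∑ σ : Run m, ∑ i, ∑ c, ∑ c', f c c' σ i := by
  calc ∑ c, ∑ c', ∑ σ : Run m, ∑ i, f c c' σ i
      = ∑ c, ∑ σ : Run m, ∑ c', ∑ i, f c c' σ i :=
        Finset.sum_congr rfl fun c _ => Finset.sum_comm
    _ = ∑ σ : Run m, ∑ c, ∑ c', ∑ i, f c c' σ i := Finset.sum_comm
    _ = ∑ σ : Run m, ∑ c, ∑ i, ∑ c', f c c' σ i :=
        Finset.sum_congr rfl fun σ _ => Finset.sum_congr rfl fun c _ => Finset.sum_comm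
    _ = ∑ σ : Run m, ∑ i, ∑ c, ∑ c', f c c' σ i :=
        Finset.sum_congr rfl fun σ _ => Finset.sum_comm

lemma E2gen {ι : Type} [Fintype ι] (E : ι → Run m) :
    ∑ c, ∑ c', Gm (fun σ : Run m => σ) c c' * Gm E c c'
      = (Fintype.card ι : ℝ) * Rr (1 : Run m) := by
  have step1 : ∀ c c', Gm (fun σ : Run m => σ) c c' * Gm E c c'
      = ∑ σ : Run m, ∑ i, (zcol σ c * zcol σ c') * (zcol (E i) c * zcol (E i) c') := by
    intro c c'
    unfold Gm
    simp only [pwoX_apply]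
    rw [Finset.sum_mul_sum]
  calc ∑ c, ∑ c', Gm (fun σ : Run m => σ) c c' * Gm E c c'
      = ∑ c, ∑ c', ∑ σ : Run m, ∑ i,
          (zcol σ c * zcol σ c') * (zcol (E i) c * zcol (E i) c') :=
        Finset.sum_congr rfl fun c _ => Finset.sum_congr rfl fun c' _ => step1 c c'
    _ = ∑ σ : Run m, ∑ i, ∑ c, ∑ c',
          (zcol σ c * zcol σ c') * (zcol (E i) c * zcol (E i) c') := swap4 _
    _ = ∑ σ : Run m, ∑ i, (dot (E i) σ) ^ 2 := by
        refine Finset.sum_congr rfl fun σ _ => Finset.sum_congr rfl fun i _ => ?_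
        rw [sq, ← dot_eq, Finset.sum_mul_sum]
        refine Finset.sum_congr rfl fun c _ => Finset.sum_congr rfl fun c' _ => ?_
        ring
    _ = ∑ σ : Run m, ∑ i, (dot σ (E i)) ^ 2 := by
        refine Finset.sum_congr rfl fun σ _ => Finset.sum_congr rfl fun i _ => ?_
        unfold dot
        rw [show (∑ p : PP m, zab (E i) p.1 * zab σ p.1)
            = ∑ p : PP m, zab σ p.1 * zab (E i) p.1 from
          Finset.sum_congr rfl fun p _ => mul_comm _ _]
    _ = ∑ σ : Run m, ∑ i, (dot (E i) σ) ^ 2 := by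
        refine Finset.sum_congr rfl fun σ _ => Finset.sum_congr rfl fun i _ => ?_
        unfold dot
        rw [show (∑ p : PP m, zab σ p.1 * zab (E i) p.1)
            = ∑ p : PP m, zab (E i) p.1 * zab σ p.1 from
          Finset.sum_congr rfl fun p _ => mul_comm _ _]
    _ = ∑ i : ι, ∑ σ : Run m, (dot (E i) σ) ^ 2 := Finset.sum_comm
    _ = ∑ i : ι, Rr (E i) := rfl
    _ = ∑ i : ι, Rr (1 : Run m) := Finset.sum_congr rfl fun i _ => Rr_const (E i)
    _ = (Fintype.card ι : ℝ) * Rr (1 : Run m) := by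
        rw [Finset.sum_const, nsmul_eq_mul, Finset.card_univ]

end Aux3

section Aux4
open Finset Matrix
variable {m : ℕ}

lemma pairsQ_maps (z : (Fin m × Fin m) × (Fin m × Fin m))
    (hz : z ∈ (pairsQ m ×ˢ pairsQ m).filter (fun z => z.1 ≠ z.2)) :
    ({z.1, z.2} : Finset (Fin m × Fin m)) ∈ (pairsQ m).powersetCard 2 := by
  simp only [Finset.mem_filter, Finset.mem_product] at hz
  refine Finset.mem_powersetCard.2 ⟨?_, Finset.card_pair hz.2⟩
  rw [Finset.insert_subset_iff, Finset.singleton_subset_iff]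
  exact ⟨hz.1.1, hz.1.2⟩

lemma fiber_eq {a b : Fin m × Fin m} (hab : a ≠ b)
    (ha : a ∈ pairsQ m) (hb : b ∈ pairsQ m) :
    ((pairsQ m ×ˢ pairsQ m).filter (fun z => z.1 ≠ z.2)).filter
        (fun z => ({z.1, z.2} : Finset (Fin m × Fin m)) = {a, b})
      = ({(a, b), (b, a)} : Finset ((Fin m × Fin m) × (Fin m × Fin m))) := by
  ext z
  simp only [Finset.mem_filter, Finset.mem_product, Finset.mem_insert, Finset.mem_singleton]
  constructor
  · rintro ⟨⟨-, hne⟩, heq⟩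
    have h1 : z.1 = a ∨ z.1 = b := by
      have h := Finset.mem_insert_self z.1 {z.2}
      rw [heq] at h
      simpa using h
    have h2 : z.2 = a ∨ z.2 = b := by
      have h : z.2 ∈ ({z.1, z.2} : Finset (Fin m × Fin m)) :=
        Finset.mem_insert_of_mem (Finset.mem_singleton_self z.2)
      rw [heq] at h
      simpa using h
    rcases h1 with h1 | h1 <;> rcases h2 with h2 | h2
    · exact absurd (h1.trans h2.symm) hne
    · left; exact Prod.ext h1 h2
    · right; exact Prod.ext h1 h2
    · exact absurd (h1.trans h2.symm) hne
  · rintro (rfl | rfl)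
    · exact ⟨⟨⟨ha, hb⟩, hab⟩, rfl⟩
    · exact ⟨⟨⟨hb, ha⟩, fun h => hab h.symm⟩, Finset.pair_comm b a⟩

lemma sum_offdiag_pairs (f : Finset (Fin m × Fin m) → ℝ) :
    ∑ z ∈ (pairsQ m ×ˢ pairsQ m).filter (fun z => z.1 ≠ z.2), f {z.1, z.2}
      = ∑ W ∈ (pairsQ m).powersetCard 2, 2 * f W := by
  rw [← Finset.sum_fiberwise_of_maps_to pairsQ_maps (fun z => f {z.1, z.2})]
  refine Finset.sum_congr rfl fun W hW => ?_
  obtain ⟨hWs, hWc⟩ := Finset.mem_powersetCard.1 hW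
  obtain ⟨a, b, hab, rfl⟩ := Finset.card_eq_two.1 hWc
  have ha : a ∈ pairsQ m := hWs (Finset.mem_insert_self a {b})
  have hb : b ∈ pairsQ m := hWs (by simp)
  rw [fiber_eq hab ha hb]
  have hne : ((a, b) : (Fin m × Fin m) × (Fin m × Fin m)) ≠ (b, a) := by
    simp only [ne_eq, Prod.mk.injEq, not_and]
    exact fun h => absurd h hab
  rw [Finset.sum_pair hne]
  show f {a, b} + f {b, a} = 2 * f {a, b}
  rw [Finset.pair_comm b a]; ring

end Aux4

section Aux5
open Finset Matrix
variable {m : ℕ}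

lemma Jchar_singleton {ι : Type} [Fintype ι] (D : ι → Run m) (a : Fin m × Fin m) :
    Jchar D {a} = ∑ i, zab (D i) a := by
  simp [Jchar]

lemma Jchar_pair {ι : Type} [Fintype ι] (D : ι → Run m) {a b : Fin m × Fin m} (h : a ≠ b) :
    Jchar D {a, b} = ∑ i, zab (D i) a * zab (D i) b := by
  unfold Jchar
  exact Finset.sum_congr rfl fun i _ => Finset.prod_pair h

lemma Gm_none_some {ι : Type} [Fintype ι] (D : ι → Run m) (p : PP m) :
    Gm D none (some p) = ∑ i, zab (D i) p.1 := by
  simp [Gm]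

lemma Gm_some_some {ι : Type} [Fintype ι] (D : ι → Run m) (p p' : PP m) :
    Gm D (some p) (some p') = ∑ i, zab (D i) p.1 * zab (D i) p'.1 := rfl

lemma Gm_none_none {ι : Type} [Fintype ι] (D : ι → Run m) :
    Gm D none none = (Fintype.card ι : ℝ) := by
  simp [Gm, Finset.card_univ]

lemma cwlp_one {n : ℕ} (D : Fin n → Run m) :
    Cwlp D 1 = ∑ p : PP m,
      (Jchar D {p.1} / (n : ℝ)
        - Jchar (fun σ : Run m => σ) {p.1} / (m.factorial : ℝ)) ^ 2 := by
  unfold Cwlp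
  rw [Finset.powersetCard_one, Finset.sum_map]
  exact Finset.sum_subtype (pairsQ m) (fun a => by simp [pairsQ]) _

lemma E1 {n : ℕ} (hn : (n : ℝ) ≠ 0) (D : Fin n → Run m) :
    ∑ c, ∑ c', (Gm D c c' / (n : ℝ)
        - Gm (fun σ : Run m => σ) c c' / (m.factorial : ℝ)) ^ 2
      = 2 * Cwlp D 1 + 2 * Cwlp D 2 := by
  have hfac : (m.factorial : ℝ) ≠ 0 := Nat.cast_ne_zero.2 (Nat.factorial_ne_zero m)
  have hGn : Gm D none none = (n : ℝ) := by rw [Gm_none_none, Fintype.card_fin]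
  have hGf : Gm (fun σ : Run m => σ) none none = (m.factorial : ℝ) := by
    rw [Gm_none_none, Fintype.card_perm, Fintype.card_fin]
  simp only [Fintype.sum_option]
  rw [Finset.sum_add_distrib]
  have t00 : (Gm D none none / (n : ℝ)
      - Gm (fun σ : Run m => σ) none none / (m.factorial : ℝ)) ^ 2 = 0 := by
    rw [hGn, hGf, div_self hn, div_self hfac, sub_self]
    norm_num
  have tC1 : ∑ p : PP m, (Gm D none (some p) / (n : ℝ)
      - Gm (fun σ : Run m => σ) none (some p) / (m.factorial : ℝ)) ^ 2 = Cwlp D 1 := by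
    rw [cwlp_one]
    refine Finset.sum_congr rfl fun p _ => ?_
    rw [Gm_none_some, Gm_none_some, Jchar_singleton, Jchar_singleton]
  have tC1' : ∑ p : PP m, (Gm D (some p) none / (n : ℝ)
      - Gm (fun σ : Run m => σ) (some p) none / (m.factorial : ℝ)) ^ 2 = Cwlp D 1 := by
    rw [← tC1]
    refine Finset.sum_congr rfl fun p _ => ?_
    rw [Gm_symm D, Gm_symm (fun σ : Run m => σ)]
  have tC2 : ∑ p : PP m, ∑ p' : PP m, (Gm D (some p) (some p') / (n : ℝ)
      - Gm (fun σ : Run m => σ) (some p) (some p') / (m.factorial : ℝ)) ^ 2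
      = 2 * Cwlp D 2 := by
    have hsub : ∀ g : (Fin m × Fin m) → ℝ,
        ∑ p : PP m, g p.1 = ∑ a ∈ pairsQ m, g a := fun g =>
      (Finset.sum_subtype (pairsQ m) (fun a => by simp [pairsQ]) g).symm
    have step : ∑ p : PP m, ∑ p' : PP m, (Gm D (some p) (some p') / (n : ℝ)
        - Gm (fun σ : Run m => σ) (some p) (some p') / (m.factorial : ℝ)) ^ 2
        = ∑ a ∈ pairsQ m, ∑ b ∈ pairsQ m,
            ((∑ i, zab (D i) a * zab (D i) b) / (n : ℝ)
              - (∑ σ : Run m, zab σ a * zab σ b) / (m.factorial : ℝ)) ^ 2 := by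
      rw [← hsub]
      refine Finset.sum_congr rfl fun p _ => ?_
      rw [← hsub]
      refine Finset.sum_congr rfl fun p' _ => ?_
      rw [Gm_some_some, Gm_some_some]
    rw [step, ← Finset.sum_product', ← Finset.sum_filter_add_sum_filter_not
        (pairsQ m ×ˢ pairsQ m) (fun z => z.1 = z.2)]
    have hdiag : ∑ z ∈ (pairsQ m ×ˢ pairsQ m).filter (fun z => z.1 = z.2),
        ((∑ i, zab (D i) z.1 * zab (D i) z.2) / (n : ℝ)
          - (∑ σ : Run m, zab σ z.1 * zab σ z.2) / (m.factorial : ℝ)) ^ 2 = 0 := by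
      refine Finset.sum_eq_zero fun z hz => ?_
      have heq : z.1 = z.2 := (Finset.mem_filter.1 hz).2
      rw [← heq]
      have h1 : (∑ i, zab (D i) z.1 * zab (D i) z.1) = (n : ℝ) := by
        rw [Finset.sum_congr rfl fun i _ => zab_sq (D i) z.1]
        simp
      have h2 : (∑ σ : Run m, zab σ z.1 * zab σ z.1) = (m.factorial : ℝ) := by
        rw [Finset.sum_congr rfl fun σ _ => zab_sq σ z.1]
        simp [Finset.card_univ, Fintype.card_perm]
      rw [h1, h2, div_self hn, div_self hfac, sub_self]
      norm_num
    have hne : ∑ z ∈ (pairsQ m ×ˢ pairsQ m).filter (fun z => ¬ z.1 = z.2),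
        ((∑ i, zab (D i) z.1 * zab (D i) z.2) / (n : ℝ)
          - (∑ σ : Run m, zab σ z.1 * zab σ z.2) / (m.factorial : ℝ)) ^ 2
        = 2 * Cwlp D 2 := by
      have hcongr : ∑ z ∈ (pairsQ m ×ˢ pairsQ m).filter (fun z => ¬ z.1 = z.2),
          ((∑ i, zab (D i) z.1 * zab (D i) z.2) / (n : ℝ)
            - (∑ σ : Run m, zab σ z.1 * zab σ z.2) / (m.factorial : ℝ)) ^ 2
          = ∑ z ∈ (pairsQ m ×ˢ pairsQ m).filter (fun z => z.1 ≠ z.2),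
              (Jchar D {z.1, z.2} / (n : ℝ)
                - Jchar (fun σ : Run m => σ) {z.1, z.2} / (m.factorial : ℝ)) ^ 2 := by
        refine Finset.sum_congr rfl fun z hz => ?_
        have hzne : z.1 ≠ z.2 := (Finset.mem_filter.1 hz).2
        rw [Jchar_pair D hzne, Jchar_pair (fun σ : Run m => σ) hzne]
      rw [hcongr, sum_offdiag_pairs (fun W => (Jchar D W / (n : ℝ)
          - Jchar (fun σ : Run m => σ) W / (m.factorial : ℝ)) ^ 2), ← Finset.mul_sum]
      rfl
    rw [hdiag, hne]; ring
  rw [tC1', tC2, t00, tC1]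
  ring

end Aux5

open Matrix in
theorem stmt7 {m n : ℕ} (hm : 2 ≤ m) (D : Fin n → Run m) :
    Matrix.trace ((pwoX D)ᵀ * pwoX D * ((pwoX D)ᵀ * pwoX D)) =
      (n : ℝ) ^ 2 *
        (Matrix.trace ((pwoX (fun σ : Run m => σ))ᵀ * pwoX (fun σ : Run m => σ) *
            ((pwoX (fun σ : Run m => σ))ᵀ * pwoX (fun σ : Run m => σ))) /
            (Nat.factorial m : ℝ) ^ 2 +
          2 * Cwlp D 1 + 2 * Cwlp D 2) := by
  rcases eq_or_ne n 0 with rfl | hn0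
  · rw [trace_eq D]
    have : ∀ c c', Gm D c c' = 0 := by
      intro c c'; unfold Gm; simp
    simp [this]
  · have hn : (n : ℝ) ≠ 0 := Nat.cast_ne_zero.2 hn0
    have hfac : (m.factorial : ℝ) ≠ 0 := Nat.cast_ne_zero.2 (Nat.factorial_ne_zero m)
    have hE1 := E1 hn D
    have hP : ∑ c, ∑ c', Gm (fun σ : Run m => σ) c c' * Gm D c c'
        = (n : ℝ) * Rr (1 : Run m) := by
      rw [E2gen D, Fintype.card_fin]
    have hT : ∑ c, ∑ c', (Gm (fun σ : Run m => σ) c c') ^ 2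
        = (m.factorial : ℝ) * Rr (1 : Run m) := by
      have h := E2gen (fun σ : Run m => σ)
      rw [Fintype.card_perm, Fintype.card_fin] at h
      rw [← h]
      exact Finset.sum_congr rfl fun c _ => Finset.sum_congr rfl fun c' _ => by rw [sq]
    have hexp : ∑ c, ∑ c', (Gm D c c' / (n : ℝ)
        - Gm (fun σ : Run m => σ) c c' / (m.factorial : ℝ)) ^ 2
        = (1 / (n : ℝ) ^ 2) * ∑ c, ∑ c', (Gm D c c') ^ 2
          - (2 / ((n : ℝ) * (m.factorial : ℝ)))
              * ∑ c, ∑ c', Gm (fun σ : Run m => σ) c c' * Gm D c c'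
          + (1 / (m.factorial : ℝ) ^ 2) * ∑ c, ∑ c', (Gm (fun σ : Run m => σ) c c') ^ 2 := by
    -- pointwise expansion
      simp only [Finset.mul_sum, ← Finset.sum_add_distrib, ← Finset.sum_sub_distrib]
      refine Finset.sum_congr rfl fun c _ => Finset.sum_congr rfl fun c' _ => ?_
      field_simp
      ring
    rw [trace_eq D, trace_eq (fun σ : Run m => σ)]
    have hC : 2 * Cwlp D 1 + 2 * Cwlp D 2
        = (1 / (n : ℝ) ^ 2) * ∑ c, ∑ c', (Gm D c c') ^ 2
          - (2 / ((n : ℝ) * (m.factorial : ℝ))) * ((n : ℝ) * Rr (1 : Run m))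
          + (1 / (m.factorial : ℝ) ^ 2) * ((m.factorial : ℝ) * Rr (1 : Run m)) := by
      rw [← hE1, hexp, hP, hT]
    rw [hT, show ((m.factorial : ℝ) * Rr (1 : Run m) / (m.factorial : ℝ) ^ 2
        + 2 * Cwlp D 1 + 2 * Cwlp D 2)
      = ((m.factorial : ℝ) * Rr (1 : Run m) / (m.factorial : ℝ) ^ 2
        + (2 * Cwlp D 1 + 2 * Cwlp D 2)) from by ring, hC]
    field_simp
    ring
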